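/- Define g_{j,k}: {0,1}^m → ℤ by g_{j,k}(x) = 2·val(x) − 2^j − 1 if x_j = 1 and x ∈ S_k, and g_{j,k}(x) = 2·val(x) otherwise, where j ≤ m' and S_k is a block as above. If val(x) < val(y) and g_{j,k}(x) > g_{j,k}(y), then x and y both lie in S_k, x_j = 0, y_j = 1, and j is the largest coordinate where x and y differ. -/

import Mathlib

def val {m : ℕ} (x : Fin m → Bool) : ℕ := ∑ i, if x i then 2 ^ (i : ℕ) else 0

/-- The block `S_k` (for `k = 1, …, 2^(m-m′)`): points `x` with
`val x ∈ [(k−1)·2^m′, k·2^m′)`. -/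
def Sblock {m : ℕ} (m' k : ℕ) : Finset (Fin m → Bool) :=
  Finset.univ.filter fun x => (k - 1) * 2 ^ m' ≤ val x ∧ val x < k * 2 ^ m'

/-- `g_{j,k} x = 2·val x − 2·2^j − 1` if `x j = 1` and `x ∈ S_k`, else `2·val x`
(0-indexed coordinate `j` has bit weight `2^j`, so twice the weight is `2^(j+1)`). -/
def gjk {m : ℕ} (m' : ℕ) (j : Fin m) (k : ℕ) (x : Fin m → Bool) : ℤ :=
  if x j = true ∧ x ∈ Sblock (m := m) m' k
  then 2 * (val x : ℤ) - 2 ^ ((j : ℕ) + 1) - 1 else 2 * (val x : ℤ)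

lemma val_testBit : ∀ {m : ℕ} (x : Fin m → Bool) (i : Fin m),
    (val x).testBit (i : ℕ) = x i := by
  intro m
  induction m with
  | zero => exact fun x i => i.elim0
  | succ n ih =>
    intro x i
    have hval : val x = (if x 0 then 1 else 0) + 2 * val (fun i : Fin n => x i.succ) := by
      rw [val, Fin.sum_univ_succ, val, Finset.mul_sum]
      congr 1
      refine Finset.sum_congr rfl fun i _ => ?_
      rcases hx : x i.succ <;> simp [hx, Fin.val_succ, pow_succ, mul_comm]
    rcases Fin.eq_zero_or_eq_succ i with h0 | ⟨i', rfl⟩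
    · subst h0
      rw [hval]
      rcases hx : x 0 <;> simp [Nat.testBit_zero] <;> omega
    · rw [hval]
      have hco : ((i'.succ : Fin (n+1)) : ℕ) = (i' : ℕ) + 1 := rfl
      rw [hco, Nat.testBit_succ]
      have hdiv : ((if x 0 then 1 else 0) + 2 * val (fun i : Fin n => x i.succ)) / 2
          = val (fun i : Fin n => x i.succ) := by split <;> omega
      rw [hdiv, ih]

lemma testBit_eq_of_div_eq {a b p : ℕ} (h : a / 2 ^ p = b / 2 ^ p) {i : ℕ} (hi : p ≤ i) :
    a.testBit i = b.testBit i := by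
  rw [Nat.testBit_eq_decide_div_mod_eq, Nat.testBit_eq_decide_div_mod_eq]
  have : 2 ^ i = 2 ^ p * 2 ^ (i - p) := by rw [← pow_add]; congr 1; omega
  rw [this, ← Nat.div_div_eq_div_mul, ← Nat.div_div_eq_div_mul, h]

/-- If `val x < val y` but `g_{j,k} x > g_{j,k} y`, then `x` and `y` both lie in
`S_k`, `x j = 0`, `y j = 1`, and `j` is the largest coordinate where they differ. -/
theorem stmt12 {m : ℕ} (m' : ℕ) (j : Fin m) (k : ℕ) (hm : m' ≤ m) (hj : (j : ℕ) < m')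
    (x y : Fin m → Bool) (h1 : val x < val y) (h2 : gjk m' j k x > gjk m' j k y) :
    x ∈ Sblock (m := m) m' k ∧ y ∈ Sblock (m := m) m' k ∧
    x j = false ∧ y j = true ∧ ∀ i : Fin m, x i ≠ y i → i ≤ j := by
  have h1z : (val x : ℤ) < (val y : ℤ) := by exact_mod_cast h1
  have hpz : (2 : ℤ) ^ ((j : ℕ) + 1) = 2 * 2 ^ (j : ℕ) := by ring
  have htz : (0 : ℤ) < 2 ^ (j : ℕ) := by positivity
  -- Step 1: determine which branches of gjk apply
  have hycond : y j = true ∧ y ∈ Sblock (m := m) m' k := by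
    by_contra hc
    rw [gjk, gjk, if_neg hc] at h2
    split at h2 <;> linarith
  have hxcond : ¬ (x j = true ∧ x ∈ Sblock (m := m) m' k) := by
    intro hc
    rw [gjk, gjk, if_pos hc, if_pos hycond] at h2
    linarith
  rw [gjk, gjk, if_neg hxcond, if_pos hycond] at h2
  -- diff bound : val y ≤ val x + 2^j
  have hdiff : val y ≤ val x + 2 ^ (j : ℕ) := by
    zify
    linarith
  obtain ⟨hyj, hyS⟩ := hycond
  have hyS' := hyS
  rw [Sblock, Finset.mem_filter] at hyS'
  obtain ⟨-, hy1, hy2⟩ := hyS'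
  -- Step 2: x ∈ S_k
  have hybit : (val y).testBit (j : ℕ) = true := by rw [val_testBit]; exact hyj
  have hymod : 2 ^ (j : ℕ) ≤ val y % 2 ^ m' := by
    by_contra h
    push_neg at h
    have := Nat.testBit_lt_two_pow h
    rw [Nat.testBit_mod_two_pow] at this
    simp [hj, hybit] at this
  have h2m : 0 < 2 ^ m' := Nat.pow_pos (by norm_num)
  have hk : 1 ≤ k := by
    rcases Nat.eq_zero_or_pos k with rfl | h
    · simp at hy2
    · exact h
  have hydiv : val y / 2 ^ m' = k - 1 := by
    have hub : val y / 2 ^ m' < k := by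
      rw [Nat.div_lt_iff_lt_mul h2m]; exact hy2
    have hlb : k - 1 ≤ val y / 2 ^ m' := by
      rw [Nat.le_div_iff_mul_le h2m]; exact hy1
    omega
  have hkey : 2 ^ m' * (k - 1) + val y % 2 ^ m' = val y := by
    conv_rhs => rw [← Nat.div_add_mod (val y) (2 ^ m')]
    rw [hydiv]
  have hxS : x ∈ Sblock (m := m) m' k := by
    rw [Sblock, Finset.mem_filter]
    refine ⟨Finset.mem_univ _, ?_, by omega⟩
    have hcomm : (k - 1) * 2 ^ m' = 2 ^ m' * (k - 1) := mul_comm _ _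
    omega
  have hxj : x j = false := by
    rcases hx : x j with _ | _
    · rfl
    · exact absurd ⟨hx, hxS⟩ hxcond
  refine ⟨hxS, hyS, hxj, hyj, ?_⟩
  -- Step 3: max differing coordinate
  have hxbit : (val x).testBit (j : ℕ) = false := by rw [val_testBit]; exact hxj
  set a := val x with ha
  set b := val y with hb
  set P : ℕ := 2 ^ ((j : ℕ) + 1) with hP
  have hp : P = 2 * 2 ^ (j : ℕ) := by rw [hP]; ring
  have hamod : a % P < 2 ^ (j : ℕ) := by
    by_contra h
    push_neg at h
    have hlt : a % P < P := Nat.mod_lt _ (Nat.pow_pos (by norm_num))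
    have ht : (a % P).testBit (j : ℕ) = true := by
      rw [Nat.testBit_eq_decide_div_mod_eq]
      have h2j : 0 < 2 ^ (j : ℕ) := Nat.pow_pos (by norm_num)
      have hq : a % P / 2 ^ (j : ℕ) = 1 := by
        have h1' : 1 ≤ a % P / 2 ^ (j : ℕ) := by
          rw [Nat.le_div_iff_mul_le h2j]; omega
        have h2' : a % P / 2 ^ (j : ℕ) < 2 := by
          rw [Nat.div_lt_iff_lt_mul h2j]; omega
        omega
      simp [hq]
    rw [hP, Nat.testBit_mod_two_pow] at ht
    simp [hxbit] at ht
  have hbmod : 2 ^ (j : ℕ) ≤ b % P := by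
    by_contra h
    push_neg at h
    have := Nat.testBit_lt_two_pow h
    rw [hP, Nat.testBit_mod_two_pow] at this
    simp [hybit] at this
  have hdivs : a / P = b / P := by
    have ha' := Nat.div_add_mod a P
    have hb' := Nat.div_add_mod b P
    rcases Nat.lt_trichotomy (a / P) (b / P) with h | h | h
    · exfalso
      have h3 : P * (a / P + 1) ≤ P * (b / P) := Nat.mul_le_mul_left _ h
      have h4 : P * (a / P + 1) = P * (a / P) + P := Nat.mul_succ _ _
      omega
    · exact h
    · exfalso
      have h3 : P * (b / P + 1) ≤ P * (a / P) := Nat.mul_le_mul_left _ h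
      have h4 : P * (b / P + 1) = P * (b / P) + P := Nat.mul_succ _ _
      have hblt : b % P < P := Nat.mod_lt _ (Nat.pow_pos (by norm_num))
      omega
  intro i hi
  by_contra hij
  push_neg at hij
  have hge : (j : ℕ) + 1 ≤ (i : ℕ) := hij
  have := testBit_eq_of_div_eq hdivs hge
  rw [val_testBit, val_testBit] at this
  exact hi this
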